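/- Let a : [t_min, t_max] → ℝ³ be a C¹ curve and x ∈ ℝ³ a point not on the curve, and let c > 0. If |a'(t)| < c for all t ∈ [t_min, t_max], then the function h(t) = t + c⁻¹|x - a(t)| is strictly increasing on [t_min, t_max]. -/

import Mathlib

open Set

/-- If `|a'(t)| < c` on `[tmin, tmax]` and `x` is off the curve, then
`h(t) = t + c⁻¹ |x - a t|` is strictly increasing on `[tmin, tmax]`. -/
theorem stmt0 (tmin tmax c : ℝ) (htt : tmin < tmax) (hc : 0 < c)
    (a a' : ℝ → EuclideanSpace ℝ (Fin 3))
    (ha : ∀ t, HasDerivAt a (a' t) t) (ha' : Continuous a')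
    (x : EuclideanSpace ℝ (Fin 3))
    (hx : ∀ t ∈ Icc tmin tmax, x ≠ a t)
    (hlt : ∀ t ∈ Icc tmin tmax, ‖a' t‖ < c) :
    StrictMonoOn (fun t => t + c⁻¹ * ‖x - a t‖) (Icc tmin tmax) := by
  set f : ℝ → ℝ := fun t => t + c⁻¹ * ‖x - a t‖ with hf
  have key : ∀ t ∈ Icc tmin tmax,
      HasDerivAt f (1 + c⁻¹ * (-(inner ℝ (x - a t) (a' t) : ℝ) / ‖x - a t‖)) t := by
    intro t ht
    have hne : x - a t ≠ 0 := sub_ne_zero.2 (hx t ht)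
    have hn : (0:ℝ) < ‖x - a t‖ := norm_pos_iff.2 hne
    have hsub : HasDerivAt (fun s => x - a s) (-(a' t)) t := by
      have h0 := (hasDerivAt_const t x).sub (ha t)
      rwa [zero_sub] at h0
    have hsq : HasDerivAt (fun s => ‖x - a s‖ ^ 2)
        (2 * (inner ℝ (x - a t) (-(a' t)) : ℝ)) t := hsub.norm_sq
    have hsqrt : HasDerivAt (fun s => Real.sqrt (‖x - a s‖ ^ 2))
        (2 * (inner ℝ (x - a t) (-(a' t)) : ℝ) / (2 * Real.sqrt (‖x - a t‖ ^ 2))) t :=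
      hsq.sqrt (by positivity)
    have heq : (fun s => Real.sqrt (‖x - a s‖ ^ 2)) = fun s => ‖x - a s‖ := by
      funext s; rw [Real.sqrt_sq (norm_nonneg _)]
    rw [heq] at hsqrt
    have hval : 2 * (inner ℝ (x - a t) (-(a' t)) : ℝ) / (2 * Real.sqrt (‖x - a t‖ ^ 2))
        = -(inner ℝ (x - a t) (a' t) : ℝ) / ‖x - a t‖ := by
      rw [Real.sqrt_sq (norm_nonneg _), inner_neg_right]
      ring
    rw [hval] at hsqrt
    exact (hasDerivAt_id' t).add (hsqrt.const_mul c⁻¹)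
  have hpos : ∀ t ∈ Icc tmin tmax,
      0 < 1 + c⁻¹ * (-(inner ℝ (x - a t) (a' t) : ℝ) / ‖x - a t‖) := by
    intro t ht
    have hne : x - a t ≠ 0 := sub_ne_zero.2 (hx t ht)
    have hn : (0:ℝ) < ‖x - a t‖ := norm_pos_iff.2 hne
    have hcs : |(inner ℝ (x - a t) (a' t) : ℝ)| ≤ ‖x - a t‖ * ‖a' t‖ :=
      abs_real_inner_le_norm _ _
    have hb : |(-(inner ℝ (x - a t) (a' t) : ℝ) / ‖x - a t‖)| ≤ ‖a' t‖ := by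
      rw [abs_div, abs_neg, abs_of_pos hn, div_le_iff₀ hn]
      linarith [hcs]
    have h1 : -(‖a' t‖) ≤ -(inner ℝ (x - a t) (a' t) : ℝ) / ‖x - a t‖ := neg_le_of_abs_le hb
    have h2 : ‖a' t‖ < c := hlt t ht
    have : c⁻¹ * (-(inner ℝ (x - a t) (a' t) : ℝ) / ‖x - a t‖) ≥ c⁻¹ * (-(‖a' t‖)) :=
      mul_le_mul_of_nonneg_left h1 (by positivity)
    have hlast : c⁻¹ * (-(‖a' t‖)) > -1 := by
      rw [mul_neg, gt_iff_lt, neg_lt_neg_iff]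
      rw [inv_mul_lt_iff₀ hc]; simpa using h2
    linarith
  have hcont : ContinuousOn f (Icc tmin tmax) := fun t ht =>
    (key t ht).continuousAt.continuousWithinAt
  apply strictMonoOn_of_deriv_pos (convex_Icc tmin tmax) hcont
  intro t ht
  rw [interior_Icc] at ht
  have ht' : t ∈ Icc tmin tmax := Ioo_subset_Icc_self ht
  rw [(key t ht').deriv]
  exact hpos t ht'
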